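/- arXiv:2507.16225 — 8 statements merged into one kernel-verified Lean document; each statement's English description precedes it below -/
import Mathlib

section
/- Any congruence subgroup Γ of SL₂(ℤ) that contains the matrices [[1,1],[0,1]] and [[1,0],[N,1]] contains Γ₁(N). -/
open Matrix MatrixGroups

namespace Gamma1Aux

variable {R : Type*} [CommRing R] {S : Type*} [CommRing S]

def um (R : Type*) [CommRing R] (x : R) : SL(2, R) :=
  ⟨!![1, x; 0, 1], by simp [Matrix.det_fin_two_of]⟩

def lm (R : Type*) [CommRing R] (y : R) : SL(2, R) :=
  ⟨!![1, 0; y, 1], by simp [Matrix.det_fin_two_of]⟩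

lemma um_mul (x y : R) : um R x * um R y = um R (x + y) := by
  apply Subtype.ext
  show (um R x).1 * (um R y).1 = _
  simp [um, Matrix.mul_fin_two]
  all_goals ring_nf

lemma lm_mul (x y : R) : lm R x * lm R y = lm R (x + y) := by
  apply Subtype.ext
  show (lm R x).1 * (lm R y).1 = _
  simp [lm, Matrix.mul_fin_two]

lemma um_zero : um R 0 = 1 := by
  apply Subtype.ext
  simp [um, Matrix.one_fin_two]

lemma lm_zero : lm R 0 = 1 := by
  apply Subtype.ext
  simp [lm, Matrix.one_fin_two]

lemma um_inv (x : R) : (um R x)⁻¹ = um R (-x) := by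
  apply inv_eq_of_mul_eq_one_right
  rw [um_mul]; simp [um_zero]

lemma lm_inv (x : R) : (lm R x)⁻¹ = lm R (-x) := by
  apply inv_eq_of_mul_eq_one_right
  rw [lm_mul]; simp [lm_zero]

lemma um_zpow (x : R) (n : ℤ) : um R x ^ n = um R (n * x) := by
  induction n using Int.induction_on with
  | zero => simp [um_zero]
  | succ k ih => rw [_root_.zpow_add_one, ih, um_mul]; congr 1; push_cast; ring
  | pred k ih => rw [_root_.zpow_sub_one, ih, um_inv, um_mul]; congr 1; push_cast; ring

lemma lm_zpow (x : R) (n : ℤ) : lm R x ^ n = lm R (n * x) := by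
  induction n using Int.induction_on with
  | zero => simp [lm_zero]
  | succ k ih => rw [_root_.zpow_add_one, ih, lm_mul]; congr 1; push_cast; ring
  | pred k ih => rw [_root_.zpow_sub_one, ih, lm_inv, lm_mul]; congr 1; push_cast; ring

lemma um_map (f : R →+* S) (x : R) :
    Matrix.SpecialLinearGroup.map f (um R x) = um S (f x) := by
  apply Subtype.ext
  show f.mapMatrix (um R x).1 = (um S (f x)).1
  ext i j
  fin_cases i <;> fin_cases j <;>
    simp [um, Matrix.SpecialLinearGroup.map_apply_coe, RingHom.mapMatrix_apply]

lemma lm_map (f : R →+* S) (x : R) :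
    Matrix.SpecialLinearGroup.map f (lm R x) = lm S (f x) := by
  apply Subtype.ext
  show f.mapMatrix (lm R x).1 = (lm S (f x)).1
  ext i j
  fin_cases i <;> fin_cases j <;>
    simp [lm, Matrix.SpecialLinearGroup.map_apply_coe, RingHom.mapMatrix_apply]

lemma exists_coprime_shift (a c : ℤ) (h : IsCoprime a c) (M : ℕ) (hM : M ≠ 0) :
    ∃ t : ℤ, IsCoprime (a + t * c) (M : ℤ) := by
  classical
  set t : ℕ := (M.primeFactors.filter (fun p : ℕ => ¬ (p : ℤ) ∣ a)).prod id with ht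
  refine ⟨(t : ℤ), ?_⟩
  rw [Int.isCoprime_iff_gcd_eq_one]
  by_contra hg
  obtain ⟨p, hp, hp1, hp2⟩ := Nat.Prime.not_coprime_iff_dvd.mp hg
  have hp1' : (p : ℤ) ∣ a + (t : ℤ) * c := by
    exact Int.dvd_natAbs.mp (Int.natCast_dvd_natCast.mpr hp1)
  by_cases hpa : (p : ℤ) ∣ a
  · have hpc : ¬ (p : ℤ) ∣ c := by
      intro hpc
      have hu := h.isUnit_of_dvd' hpa hpc
      rw [Int.isUnit_iff] at hu
      have h2 := hp.one_lt
      rcases hu with h1 | h1 <;> omega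
    have hpt : ¬ (p : ℕ) ∣ t := by
      intro hpt
      rw [ht] at hpt
      obtain ⟨q, hq, hpq⟩ := (Nat.Prime.prime hp).exists_mem_finset_dvd hpt
      simp only [Finset.mem_filter, Nat.mem_primeFactors, id] at hq
      have : p = q := (Nat.prime_dvd_prime_iff_eq hp hq.1.1).mp hpq
      exact hq.2 (this ▸ hpa)
    have hptc : ¬ (p : ℤ) ∣ (t : ℤ) * c := by
      intro hd
      rcases (Int.Prime.dvd_mul' hp hd) with h1 | h1
      · exact hpt (Int.natCast_dvd_natCast.mp h1)
      · exact hpc h1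
    exact hptc (by simpa using dvd_sub hp1' hpa)
  · have hpt : (p : ℕ) ∣ t := by
      rw [ht]
      refine Finset.dvd_prod_of_mem id ?_
      simp only [Finset.mem_filter, Nat.mem_primeFactors]
      exact ⟨⟨hp, hp2, hM⟩, hpa⟩
    have : (p : ℤ) ∣ a := by
      have h3 : (p : ℤ) ∣ (t : ℤ) * c := Dvd.dvd.mul_right (Int.natCast_dvd_natCast.mpr hpt) c
      simpa using dvd_sub hp1' h3
    exact hpa this

lemma key (a b c d n t v β : R)
    (hwv : (a + t * c) * v = 1)
    (hdet : a * d - b * c = 1)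
    (hβ : a + t * c = 1 + n * β) :
    ((um R (-t) * (lm R (c * v) * (um R ((b + t * d) * (a + t * c)) *
      (lm R (-(n * v)) * (um R β * (lm R n * um R (-(β * v)))))))) :
        Matrix (Fin 2) (Fin 2) R) = !![a, b; c, d] := by
  have hv : (1 + n * β) * v = 1 := by rw [← hβ]; exact hwv
  have e1 : !![(1:R),0;-(n*v),1] * (!![1,β;0,1] * (!![1,0;n,1] * !![1,-(β*v);0,1]))
      = !![1 + n*β, 0; 0, v] := by
    ext i j
    fin_cases i <;> fin_cases j <;>
      simp [Matrix.mul_apply, Fin.sum_univ_two]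
    · ring
    · linear_combination (-β) * hv
    · linear_combination (-n) * hv
    · linear_combination (n*β*v - 1) * hv
  have e2 : !![(1:R), (b+t*d)*(a+t*c); 0, 1] * !![1 + n*β, 0; 0, v]
      = !![a + t*c, b + t*d; 0, v] := by
    ext i j
    fin_cases i <;> fin_cases j <;>
      simp [Matrix.mul_apply, Fin.sum_univ_two]
    · linear_combination (-1 : R) * hβ
    · linear_combination (b + t*d) * hwv
  have e3 : !![(1:R), 0; c*v, 1] * !![a + t*c, b + t*d; 0, v]
      = !![a + t*c, b + t*d; c, d] := by
    ext i j
    fin_cases i <;> fin_cases j <;>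
      simp [Matrix.mul_apply, Fin.sum_univ_two]
    · linear_combination c * hwv
    · linear_combination d * hwv - v * hdet
  have e4 : !![(1:R), -t; 0, 1] * !![a + t*c, b + t*d; c, d] = !![a, b; c, d] := by
    ext i j
    fin_cases i <;> fin_cases j <;>
      simp [Matrix.mul_apply, Fin.sum_univ_two]
  show (um R (-t)).1 * ((lm R (c * v)).1 * ((um R ((b + t * d) * (a + t * c))).1 *
      ((lm R (-(n * v))).1 * ((um R β).1 * ((lm R n).1 * (um R (-(β * v))).1))))) = _
  show !![(1:R), -t; 0, 1] * (!![(1:R), 0; c*v, 1] * (!![(1:R), (b+t*d)*(a+t*c); 0, 1] *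
      (!![(1:R),0;-(n*v),1] * (!![1,β;0,1] * (!![1,0;n,1] * !![1,-(β*v);0,1]))))) = _
  rw [e1, e2, e3, e4]

lemma zmod_cast_down {M₀ M' : ℕ} (h : (M' : ℤ) ∣ (M₀ : ℤ)) (x r : ℤ)
    (hx : (x : ZMod M₀) = (r : ZMod M₀)) : (x : ZMod M') = (r : ZMod M') := by
  have h1 : ((x - r : ℤ) : ZMod M₀) = 0 := by push_cast; rw [hx]; ring
  rw [ZMod.intCast_zmod_eq_zero_iff_dvd] at h1
  have h2 : (M' : ℤ) ∣ x - r := dvd_trans h h1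
  rw [← ZMod.intCast_zmod_eq_zero_iff_dvd] at h2
  push_cast at h2
  exact sub_eq_zero.mp h2

end Gamma1Aux

open Gamma1Aux CongruenceSubgroup

theorem gamma1_le_of_congruence_contains_T_and_lowerN (N : ℕ) (hN : 0 < N)
    (Γ : Subgroup SL(2, ℤ)) (hΓ : CongruenceSubgroup.IsCongruenceSubgroup Γ)
    (hT : (⟨!![1, 1; 0, 1], by simp [Matrix.det_fin_two_of]⟩ : SL(2, ℤ)) ∈ Γ)
    (hL : (⟨!![1, 0; (N : ℤ), 1], by simp [Matrix.det_fin_two_of]⟩ : SL(2, ℤ)) ∈ Γ) :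
    CongruenceSubgroup.Gamma1 N ≤ Γ := by
  obtain ⟨M', hM'0, hM'⟩ := hΓ
  set M₀ : ℕ := N * (M' : ℕ) with hM₀def
  have hM₀ : M₀ ≠ 0 := Nat.mul_ne_zero hN.ne' hM'0
  have hdvd : ((M' : ℕ) : ℤ) ∣ (M₀ : ℤ) := by
    exact_mod_cast Int.natCast_dvd_natCast.mpr (Dvd.intro_left N rfl)
  have hNdvd : ((N : ℕ) : ℤ) ∣ (M₀ : ℤ) := by
    exact_mod_cast Int.natCast_dvd_natCast.mpr (Dvd.intro (M' : ℕ) rfl)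
  have hGammaM : Gamma M₀ ≤ Γ := by
    refine le_trans ?_ hM'
    intro g hg
    rw [Gamma_mem] at hg ⊢
    refine ⟨?_, ?_, ?_, ?_⟩
    · have := zmod_cast_down hdvd (g 0 0) 1 (by simpa using hg.1)
      simpa using this
    · have := zmod_cast_down hdvd (g 0 1) 0 (by simpa using hg.2.1)
      simpa using this
    · have := zmod_cast_down hdvd (g 1 0) 0 (by simpa using hg.2.2.1)
      simpa using this
    · have := zmod_cast_down hdvd (g 1 1) 1 (by simpa using hg.2.2.2)
      simpa using this
  intro A hA
  rw [Gamma1_mem] at hA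
  obtain ⟨ha1, hd1, hc1⟩ := hA
  set a : ℤ := A 0 0 with hadef
  set b : ℤ := A 0 1 with hbdef
  set c : ℤ := A 1 0 with hcdef
  set d : ℤ := A 1 1 with hddef
  have hdetA : a * d - b * c = 1 := by
    have h2 := A.2
    rw [Matrix.det_fin_two] at h2
    exact h2
  obtain ⟨α, hα⟩ : ((N : ℕ) : ℤ) ∣ (a - 1) := by
    rw [← ZMod.intCast_zmod_eq_zero_iff_dvd]
    push_cast
    rw [ha1]
    ring
  obtain ⟨ζ, hζ⟩ : ((N : ℕ) : ℤ) ∣ c := by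
    rw [← ZMod.intCast_zmod_eq_zero_iff_dvd]
    exact hc1
  have hcop : IsCoprime a c := ⟨d, -b, by linear_combination hdetA⟩
  obtain ⟨t, ht⟩ := exists_coprime_shift a c hcop M₀ hM₀
  obtain ⟨v, u, huv⟩ := ht
  -- facts in ZMod M₀
  have hwv : ((a : ZMod M₀) + (t : ZMod M₀) * (c : ZMod M₀)) * (v : ZMod M₀) = 1 := by
    have h3 := congrArg (fun z : ℤ => (z : ZMod M₀)) huv
    push_cast at h3
    rw [ZMod.natCast_self] at h3
    linear_combination h3
  have hdet' : (a : ZMod M₀) * (d : ZMod M₀) - (b : ZMod M₀) * (c : ZMod M₀) = 1 := by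
    have h3 := congrArg (fun z : ℤ => (z : ZMod M₀)) hdetA
    push_cast at h3
    linear_combination h3
  set β : ℤ := α + t * ζ with hβdef
  have hβ' : (a : ZMod M₀) + (t : ZMod M₀) * (c : ZMod M₀)
      = 1 + ((N : ℕ) : ZMod M₀) * (β : ZMod M₀) := by
    have h1 : (a : ℤ) = 1 + ((N : ℕ) : ℤ) * α := by linarith [hα]
    have h4 : a + t * c = 1 + ((N : ℕ) : ℤ) * β := by
      rw [hβdef, hζ] at *
      linear_combination h1 + t * hζ
    have h3 := congrArg (fun z : ℤ => (z : ZMod M₀)) h4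
    push_cast at h3
    linear_combination h3
  -- membership of generators
  have hTmem : um ℤ 1 ∈ Γ := by
    have : um ℤ 1 = (⟨!![1, 1; 0, 1], by simp [Matrix.det_fin_two_of]⟩ : SL(2, ℤ)) :=
      Subtype.ext rfl
    rw [this]; exact hT
  have humΓ : ∀ x : ℤ, um ℤ x ∈ Γ := by
    intro x
    have h := Subgroup.zpow_mem Γ hTmem x
    rwa [um_zpow, mul_one] at h
  have hLmem : lm ℤ ((N : ℕ) : ℤ) ∈ Γ := by
    have : lm ℤ ((N : ℕ) : ℤ) = (⟨!![1, 0; ((N : ℕ) : ℤ), 1],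
        by simp [Matrix.det_fin_two_of]⟩ : SL(2, ℤ)) := Subtype.ext rfl
    rw [this]; exact hL
  have hlmΓ : ∀ x : ℤ, lm ℤ (((N : ℕ) : ℤ) * x) ∈ Γ := by
    intro x
    have h := Subgroup.zpow_mem Γ hLmem x
    rwa [lm_zpow, mul_comm] at h
  set P : SL(2, ℤ) := um ℤ (-t) * (lm ℤ (c * v) * (um ℤ ((b + t * d) * (a + t * c)) *
      (lm ℤ (-(((N : ℕ) : ℤ) * v)) * (um ℤ β * (lm ℤ ((N : ℕ) : ℤ) * um ℤ (-(β * v)))))))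
    with hPdef
  have hPΓ : P ∈ Γ := by
    rw [hPdef]
    refine Subgroup.mul_mem _ (humΓ _) ?_
    refine Subgroup.mul_mem _ ?_ ?_
    · rw [show c * v = ((N : ℕ) : ℤ) * (ζ * v) by rw [hζ]; ring]
      exact hlmΓ _
    refine Subgroup.mul_mem _ (humΓ _) ?_
    refine Subgroup.mul_mem _ ?_ ?_
    · rw [show -(((N : ℕ) : ℤ) * v) = ((N : ℕ) : ℤ) * (-v) by ring]
      exact hlmΓ _
    refine Subgroup.mul_mem _ (humΓ _) ?_
    refine Subgroup.mul_mem _ ?_ (humΓ _)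
    · rw [show ((N : ℕ) : ℤ) = ((N : ℕ) : ℤ) * 1 by ring]
      exact hlmΓ _
  -- the reduction mod M₀
  have hmap : Matrix.SpecialLinearGroup.map (Int.castRingHom (ZMod M₀)) P
      = Matrix.SpecialLinearGroup.map (Int.castRingHom (ZMod M₀)) A := by
    apply Subtype.ext
    have hPm : (Matrix.SpecialLinearGroup.map (Int.castRingHom (ZMod M₀)) P : SL(2, ZMod M₀))
        = um (ZMod M₀) (-(t : ZMod M₀)) * (lm (ZMod M₀) ((c : ZMod M₀) * (v : ZMod M₀)) *
          (um (ZMod M₀) (((b : ZMod M₀) + (t : ZMod M₀) * (d : ZMod M₀)) *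
            ((a : ZMod M₀) + (t : ZMod M₀) * (c : ZMod M₀))) *
          (lm (ZMod M₀) (-(((N : ℕ) : ZMod M₀) * (v : ZMod M₀))) *
          (um (ZMod M₀) (β : ZMod M₀) *
          (lm (ZMod M₀) ((N : ℕ) : ZMod M₀) * um (ZMod M₀) (-((β : ZMod M₀) * (v : ZMod M₀)))))))) := by
      rw [hPdef]
      simp only [_root_.map_mul, um_map, lm_map]
      simp only [Int.coe_castRingHom]
      push_cast
      rfl
    rw [hPm]
    have hAm : (Matrix.SpecialLinearGroup.map (Int.castRingHom (ZMod M₀)) A :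
        SL(2, ZMod M₀)).1 = !![(a : ZMod M₀), (b : ZMod M₀); (c : ZMod M₀), (d : ZMod M₀)] := by
      ext i j
      fin_cases i <;> fin_cases j <;>
        simp [SL_reduction_mod_hom_val, hadef, hbdef, hcdef, hddef]
    rw [hAm]
    exact key (R := ZMod M₀) (a : ZMod M₀) (b : ZMod M₀) (c : ZMod M₀) (d : ZMod M₀)
      ((N : ℕ) : ZMod M₀) (t : ZMod M₀) (v : ZMod M₀) (β : ZMod M₀) hwv hdet' hβ'
  have hker : P⁻¹ * A ∈ Gamma M₀ := by
    have h5 : Matrix.SpecialLinearGroup.map (Int.castRingHom (ZMod M₀)) (P⁻¹ * A) = 1 := by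
      rw [_root_.map_mul, _root_.map_inv, hmap, inv_mul_cancel]
    exact h5
  have h6 := Subgroup.mul_mem _ hPΓ (hGammaM hker)
  rwa [← mul_assoc, mul_inv_cancel, one_mul] at h6
end

section
/- For any prime p and positive integer N, the subgroup of SL₂(ℤ) generated by the matrix [[1,0],[N,1]] together with Γ₁(pN) equals Γ₁(N). -/
open Matrix MatrixGroups

namespace G1C

/-- lower unipotent -/
def Lm (m : ℤ) : SL(2, ℤ) := ⟨!![1, 0; m, 1], by simp [Matrix.det_fin_two_of]⟩
/-- upper unipotent -/
def Tm (x : ℤ) : SL(2, ℤ) := ⟨!![1, x; 0, 1], by simp [Matrix.det_fin_two_of]⟩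

@[simp] lemma Lm_coe (m : ℤ) : (Lm m : Matrix (Fin 2) (Fin 2) ℤ) = !![1,0;m,1] := rfl
@[simp] lemma Tm_coe (x : ℤ) : (Tm x : Matrix (Fin 2) (Fin 2) ℤ) = !![1,x;0,1] := rfl

lemma Lm_mul (m k : ℤ) : Lm m * Lm k = Lm (m + k) := by
  apply Subtype.ext
  rw [Matrix.SpecialLinearGroup.coe_mul, Lm_coe, Lm_coe, Lm_coe]; simp [Matrix.mul_fin_two]

lemma Lm_zero : Lm 0 = 1 := by
  apply Subtype.ext
  simp [Lm, Matrix.one_fin_two]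

lemma Lm_inv (m : ℤ) : (Lm m)⁻¹ = Lm (-m) := by
  apply inv_eq_of_mul_eq_one_right
  rw [Lm_mul]; simp [Lm_zero]

lemma Lm_zpow (m : ℤ) (y : ℤ) : (Lm m) ^ y = Lm (m * y) := by
  induction y using Int.induction_on with
  | zero => simpa using Lm_zero.symm
  | succ k ih =>
      rw [_root_.zpow_add_one, ih, Lm_mul]
      congr 1; ring
  | pred k ih =>
      rw [_root_.zpow_sub_one, ih, Lm_inv, Lm_mul]
      congr 1; ring

lemma mem_Gamma1_iff (M : ℕ) (A : SL(2, ℤ)) :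
    A ∈ CongruenceSubgroup.Gamma1 M ↔
      (M : ℤ) ∣ (A 0 0 - 1) ∧ (M : ℤ) ∣ (A 1 1 - 1) ∧ (M : ℤ) ∣ A 1 0 := by
  have h1 : ∀ x : ℤ, ((x : ZMod M) = 1 ↔ (M : ℤ) ∣ (x - 1)) := by
    intro x
    rw [← ZMod.intCast_zmod_eq_zero_iff_dvd]
    push_cast
    rw [sub_eq_zero]
  rw [CongruenceSubgroup.Gamma1_mem, h1, h1, ZMod.intCast_zmod_eq_zero_iff_dvd]

lemma solve (p : ℕ) (hp : p.Prime) {u : ℤ} (hu : ¬ (p:ℤ) ∣ u) (t : ℤ) :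
    ∃ x : ℤ, (p:ℤ) ∣ (u * x + t) := by
  haveI : Fact p.Prime := ⟨hp⟩
  have hu' : (u : ZMod p) ≠ 0 := by rwa [Ne, ZMod.intCast_zmod_eq_zero_iff_dvd]
  refine ⟨ZMod.cast (-(t : ZMod p) * (u : ZMod p)⁻¹), ?_⟩
  rw [← ZMod.intCast_zmod_eq_zero_iff_dvd]
  push_cast [ZMod.intCast_zmod_cast]
  rw [show (u : ZMod p) * (-(t : ZMod p) * (u : ZMod p)⁻¹) = -(t:ZMod p) * ((u:ZMod p) * (u:ZMod p)⁻¹) by ring,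
    mul_inv_cancel₀ hu']
  ring

end G1C

open G1C in
theorem closure_lowerN_union_Gamma1_pN (p : ℕ) (hp : p.Prime) (N : ℕ) (hN : 0 < N) :
    Subgroup.closure
      (({(⟨!![1, 0; (N : ℤ), 1], by simp [Matrix.det_fin_two_of]⟩ : SL(2, ℤ))} :
          Set SL(2, ℤ)) ∪
        (CongruenceSubgroup.Gamma1 (p * N) : Set SL(2, ℤ))) =
      CongruenceSubgroup.Gamma1 N := by
  set n : ℤ := (N : ℤ) with hn
  apply le_antisymm
  · rw [Subgroup.closure_le]
    rintro x (hx | hx)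
    · have hx' : x = Lm n := hx
      subst hx'
      rw [SetLike.mem_coe, mem_Gamma1_iff]
      refine ⟨?_, ?_, ?_⟩ <;> simp [Lm, hn]
    · rw [SetLike.mem_coe, mem_Gamma1_iff] at hx ⊢
      have hdvd : (N : ℤ) ∣ ((p * N : ℕ) : ℤ) := ⟨(p : ℤ), by push_cast; ring⟩
      exact ⟨hdvd.trans hx.1, hdvd.trans hx.2.1, hdvd.trans hx.2.2⟩
  · intro γ hγ
    rw [mem_Gamma1_iff] at hγ
    obtain ⟨a, b, c, d, hcoe⟩ :
        ∃ a b c d : ℤ, (γ : Matrix (Fin 2) (Fin 2) ℤ) = !![a, b; c, d] :=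
      ⟨_, _, _, _, Matrix.eta_fin_two _⟩
    have hP : Prime (p : ℤ) := Nat.prime_iff_prime_int.mp hp
    have hp1 : ¬ (p : ℤ) ∣ 1 := hP.not_dvd_one
    have hdet : a * d - b * c = 1 := by
      have hh := γ.prop
      rwa [hcoe, Matrix.det_fin_two_of] at hh
    have hga : n ∣ a - 1 := by
      have := hγ.1; rwa [show (γ 0 0 : ℤ) = a from by rw [show (γ 0 0 : ℤ) = (γ : Matrix (Fin 2) (Fin 2) ℤ) 0 0 from rfl, hcoe]; rfl] at this
    have hgd : n ∣ d - 1 := by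
      have := hγ.2.1; rwa [show (γ 1 1 : ℤ) = d from by rw [show (γ 1 1 : ℤ) = (γ : Matrix (Fin 2) (Fin 2) ℤ) 1 1 from rfl, hcoe]; rfl] at this
    have hgc : n ∣ c := by
      have := hγ.2.2; rwa [show (γ 1 0 : ℤ) = c from by rw [show (γ 1 0 : ℤ) = (γ : Matrix (Fin 2) (Fin 2) ℤ) 1 0 from rfl, hcoe]; rfl] at this
    obtain ⟨α, hα⟩ := hga
    obtain ⟨δ, hδ⟩ := hgd
    obtain ⟨s, hs⟩ := hgc
    have ha : a = 1 + n * α := by linarith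
    have hd : d = 1 + n * δ := by linarith
    -- Step 1 : find yA, xB making the (0,0) entry ≡ 1 mod p
    have step1 : ∃ yA xB : ℤ, (p : ℤ) ∣ (a + xB * (n * (yA * a + s)) - 1) := by
      by_cases hpn : (p : ℤ) ∣ n
      · refine ⟨0, 0, ?_⟩
        rw [show a + 0 * (n * (0 * a + s)) - 1 = n * α by rw [ha]; ring]
        exact hpn.mul_right α
      · by_cases hps : (p : ℤ) ∣ s
        · have hpa : ¬ (p : ℤ) ∣ a := by
            intro hpa
            apply hp1
            have hbc : (p : ℤ) ∣ b * c := by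
              rw [hs, show b * (n * s) = (b * n) * s from by ring]
              exact hps.mul_left (b * n)
            exact hdet ▸ dvd_sub (hpa.mul_right d) hbc
          obtain ⟨yA, h1⟩ := solve p hp hpa (s - 1)
          have hu : ¬ (p : ℤ) ∣ n * (yA * a + s) := by
            intro hdd
            rcases hP.dvd_mul.mp hdd with h | h
            · exact hpn h
            · apply hp1
              have h2 := dvd_sub h h1
              rwa [show yA * a + s - (a * yA + (s - 1)) = 1 from by ring] at h2
          obtain ⟨xB, h2⟩ := solve p hp hu (a - 1)
          exact ⟨yA, xB, by rwa [show a + xB * (n * (yA * a + s)) - 1 =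
            n * (yA * a + s) * xB + (a - 1) from by ring]⟩
        · have hu : ¬ (p : ℤ) ∣ n * s := fun hdd => (hP.dvd_mul.mp hdd).elim hpn hps
          obtain ⟨xB, h2⟩ := solve p hp hu (a - 1)
          exact ⟨0, xB, by rwa [show a + xB * (n * (0 * a + s)) - 1 =
            n * s * xB + (a - 1) from by ring]⟩
    obtain ⟨yA, xB, h2a⟩ := step1
    -- entries after left mult by Lm (n*yA) then Tm xB
    obtain ⟨c2, hc2⟩ : ∃ x : ℤ, x = n * yA * a + c := ⟨_, rfl⟩
    obtain ⟨d2, hd2⟩ : ∃ x : ℤ, x = n * yA * b + d := ⟨_, rfl⟩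
    obtain ⟨a2, ha2⟩ : ∃ x : ℤ, x = a + xB * c2 := ⟨_, rfl⟩
    obtain ⟨b2, hb2⟩ : ∃ x : ℤ, x = b + xB * d2 := ⟨_, rfl⟩
    obtain ⟨α2, hα2⟩ : ∃ x : ℤ, x = α + xB * (yA * a + s) := ⟨_, rfl⟩
    obtain ⟨s2, hs2⟩ : ∃ x : ℤ, x = yA * a + s := ⟨_, rfl⟩
    have ha2' : a2 = 1 + n * α2 := by rw [ha2, hc2, hα2, ha, hs]; ring
    have hc2' : c2 = n * s2 := by rw [hc2, hs2, hs]; ring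
    have hpα2 : (p : ℤ) ∣ n * α2 := by
      rw [hα2, show n * (α + xB * (yA * a + s)) = a + xB * (n * (yA * a + s)) - 1 from by
        rw [ha]; ring]
      exact h2a
    have hpa2 : ¬ (p : ℤ) ∣ a2 := by
      intro hdd
      apply hp1
      have h' : (p : ℤ) ∣ a2 - 1 := by rw [ha2', add_sub_cancel_left]; exact hpα2
      have := dvd_sub hdd h'
      rwa [sub_sub_cancel] at this
    -- Step 2 : kill the (1,0) entry mod p*n
    obtain ⟨yC, h3⟩ := solve p hp hpa2 s2
    obtain ⟨k3, hk3⟩ := h3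
    obtain ⟨c3, hc3⟩ : ∃ x : ℤ, x = n * yC * a2 + c2 := ⟨_, rfl⟩
    obtain ⟨d3, hd3⟩ : ∃ x : ℤ, x = n * yC * b2 + d2 := ⟨_, rfl⟩
    -- Step 3 : make the (0,1) entry ≡ 1 mod p
    obtain ⟨xD, h4⟩ := solve p hp hpa2 (b2 - 1)
    obtain ⟨b4, hb4⟩ : ∃ x : ℤ, x = a2 * xD + b2 := ⟨_, rfl⟩
    obtain ⟨d4, hd4⟩ : ∃ x : ℤ, x = c3 * xD + d3 := ⟨_, rfl⟩
    have hpb4 : ¬ (p : ℤ) ∣ b4 := by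
      intro hdd
      apply hp1
      have h7 := dvd_sub hdd h4
      rwa [hb4, show a2 * xD + b2 - (a2 * xD + (b2 - 1)) = 1 from by ring] at h7
    -- Step 4 : make the (0,0) entry ≡ 1 mod p*n
    obtain ⟨yE, h5⟩ := solve p hp hpb4 α2
    obtain ⟨k5, hk5⟩ := h5
    obtain ⟨a5, ha5⟩ : ∃ x : ℤ, x = a2 + b4 * (n * yE) := ⟨_, rfl⟩
    obtain ⟨c5, hc5⟩ : ∃ x : ℤ, x = c3 + d4 * (n * yE) := ⟨_, rfl⟩
    have hpna5 : ((p : ℤ) * n) ∣ a5 - 1 :=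
      ⟨k5, by rw [ha5, ha2']; linear_combination n * hk5⟩
    have hpa5 : ¬ (p : ℤ) ∣ a5 := by
      intro hdd
      apply hp1
      have h' : (p : ℤ) ∣ a5 - 1 := (dvd_mul_right (p:ℤ) n).trans hpna5
      have := dvd_sub hdd h'
      rwa [sub_sub_cancel] at this
    obtain ⟨s5, hs5⟩ : ∃ x : ℤ, x = (p : ℤ) * k3 + d4 * yE := ⟨_, rfl⟩
    have hc5' : c5 = n * s5 := by
      rw [hc5, hc3, hc2', hs5]; linear_combination n * hk3
    -- Step 5 : kill the (1,0) entry mod p*n again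
    obtain ⟨z, h6⟩ := solve p hp hpa5 s5
    obtain ⟨k6, hk6⟩ := h6
    obtain ⟨c6, hc6⟩ : ∃ x : ℤ, x = n * z * a5 + c5 := ⟨_, rfl⟩
    obtain ⟨d6, hd6⟩ : ∃ x : ℤ, x = n * z * b4 + d4 := ⟨_, rfl⟩
    have hpnc6 : ((p : ℤ) * n) ∣ c6 :=
      ⟨k6, by rw [hc6, hc5']; linear_combination n * hk6⟩
    -- the matrix computations
    have hM2 : ((Tm xB * (Lm (n * yA) * γ) : SL(2, ℤ)) : Matrix (Fin 2) (Fin 2) ℤ) =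
        !![a2, b2; c2, d2] := by
      rw [Matrix.SpecialLinearGroup.coe_mul, Matrix.SpecialLinearGroup.coe_mul,
        Tm_coe, Lm_coe, hcoe, ha2, hb2, hc2, hd2]
      ext i j
      fin_cases i <;> fin_cases j <;>
        simp [Matrix.mul_apply, Fin.sum_univ_two] <;> ring
    have hM3 : ((Lm (n * yC) * (Tm xB * (Lm (n * yA) * γ)) : SL(2, ℤ)) :
        Matrix (Fin 2) (Fin 2) ℤ) = !![a2, b2; c3, d3] := by
      rw [Matrix.SpecialLinearGroup.coe_mul, Lm_coe, hM2, hc3, hd3]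
      ext i j
      fin_cases i <;> fin_cases j <;>
        simp [Matrix.mul_apply, Fin.sum_univ_two] <;> ring
    have hM4 : (((Lm (n * yC) * (Tm xB * (Lm (n * yA) * γ))) * Tm xD : SL(2, ℤ)) :
        Matrix (Fin 2) (Fin 2) ℤ) = !![a2, b4; c3, d4] := by
      rw [Matrix.SpecialLinearGroup.coe_mul, Tm_coe, hM3, hb4, hd4]
      ext i j
      fin_cases i <;> fin_cases j <;>
        simp [Matrix.mul_apply, Fin.sum_univ_two] <;> ring
    have hM5 : ((((Lm (n * yC) * (Tm xB * (Lm (n * yA) * γ))) * Tm xD) * Lm (n * yE) :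
        SL(2, ℤ)) : Matrix (Fin 2) (Fin 2) ℤ) = !![a5, b4; c5, d4] := by
      rw [Matrix.SpecialLinearGroup.coe_mul, Lm_coe, hM4, ha5, hc5]
      ext i j
      fin_cases i <;> fin_cases j <;>
        simp [Matrix.mul_apply, Fin.sum_univ_two] <;> ring
    have hM6 : ((Lm (n * z) * ((((Lm (n * yC) * (Tm xB * (Lm (n * yA) * γ))) * Tm xD) *
        Lm (n * yE))) : SL(2, ℤ)) : Matrix (Fin 2) (Fin 2) ℤ) = !![a5, b4; c6, d6] := by
      rw [Matrix.SpecialLinearGroup.coe_mul, Lm_coe, hM5, hc6, hd6]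
      ext i j
      fin_cases i <;> fin_cases j <;>
        simp [Matrix.mul_apply, Fin.sum_univ_two] <;> ring
    -- the final element lies in Gamma1 (p * N)
    have hdet6 : a5 * d6 - b4 * c6 = 1 := by
      have hh := (Lm (n * z) * ((((Lm (n * yC) * (Tm xB * (Lm (n * yA) * γ))) * Tm xD) *
        Lm (n * yE))) : SL(2, ℤ)).prop
      rwa [hM6, Matrix.det_fin_two_of] at hh
    have hmod : ((p * N : ℕ) : ℤ) = (p : ℤ) * n := by push_cast; ring
    have hmem6 : (Lm (n * z) * ((((Lm (n * yC) * (Tm xB * (Lm (n * yA) * γ))) * Tm xD) *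
        Lm (n * yE))) : SL(2, ℤ)) ∈ CongruenceSubgroup.Gamma1 (p * N) := by
      rw [mem_Gamma1_iff, hmod]
      refine ⟨?_, ?_, ?_⟩
      · show ((p : ℤ) * n) ∣ ((Lm (n * z) * ((((Lm (n * yC) * (Tm xB * (Lm (n * yA) * γ))) *
          Tm xD) * Lm (n * yE))) : SL(2, ℤ)) : Matrix (Fin 2) (Fin 2) ℤ) 0 0 - 1
        rw [hM6]
        simpa using hpna5
      · show ((p : ℤ) * n) ∣ ((Lm (n * z) * ((((Lm (n * yC) * (Tm xB * (Lm (n * yA) * γ))) *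
          Tm xD) * Lm (n * yE))) : SL(2, ℤ)) : Matrix (Fin 2) (Fin 2) ℤ) 1 1 - 1
        rw [hM6]
        have heq : d6 - 1 = b4 * c6 - (a5 - 1) * d6 := by linear_combination hdet6
        simpa [heq] using dvd_sub (hpnc6.mul_left b4) (hpna5.mul_right d6)
      · show ((p : ℤ) * n) ∣ ((Lm (n * z) * ((((Lm (n * yC) * (Tm xB * (Lm (n * yA) * γ))) *
          Tm xD) * Lm (n * yE))) : SL(2, ℤ)) : Matrix (Fin 2) (Fin 2) ℤ) 1 0
        rw [hM6]
        simpa using hpnc6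
    -- assemble
    have hT : ∀ x : ℤ, Tm x ∈ Subgroup.closure
        (({(⟨!![1, 0; n, 1], by simp [Matrix.det_fin_two_of]⟩ : SL(2, ℤ))} :
          Set SL(2, ℤ)) ∪ (CongruenceSubgroup.Gamma1 (p * N) : Set SL(2, ℤ))) := by
      intro x
      refine Subgroup.subset_closure (Or.inr ?_)
      rw [SetLike.mem_coe, mem_Gamma1_iff]
      refine ⟨?_, ?_, ?_⟩ <;> simp [Tm]
    have hL : ∀ y : ℤ, Lm (n * y) ∈ Subgroup.closure
        (({(⟨!![1, 0; n, 1], by simp [Matrix.det_fin_two_of]⟩ : SL(2, ℤ))} :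
          Set SL(2, ℤ)) ∪ (CongruenceSubgroup.Gamma1 (p * N) : Set SL(2, ℤ))) := by
      intro y
      have he : Lm (n * y) = (Lm n) ^ y := (Lm_zpow n y).symm
      rw [he]
      refine Subgroup.zpow_mem _ (Subgroup.subset_closure ?_) y
      left
      rfl
    rw [← Subgroup.mul_mem_cancel_left _ (hL yA),
      ← Subgroup.mul_mem_cancel_left _ (hT xB),
      ← Subgroup.mul_mem_cancel_left _ (hL yC),
      ← Subgroup.mul_mem_cancel_right _ (hT xD),
      ← Subgroup.mul_mem_cancel_right _ (hL yE),
      ← Subgroup.mul_mem_cancel_left _ (hL z)]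
    exact Subgroup.subset_closure (Or.inr hmem6)
end

section
/- Define E(a,b,c,d) = ac(1-d²) + d(b-c+3) - 3. If [[a,b],[c,d]] ∈ SL₂(ℤ) with c ≡ 0 (mod 4) and d odd, then E(a, b, c+4a, d+4b) - E(a, b, c, d) ≡ -4 (mod 24). -/
def E (a b c d : ℤ) : ℤ := a * c * (1 - d ^ 2) + d * (b - c + 3) - 3

lemma aux8 : ∀ a b f e : ZMod 8, a * (2*e+1) - b * (4*f) = 1 →
    12*b - 4*b*(4*f) + 4*b^2 - 4*a*(2*e+1) - 16*a*b - 8*a*b*(4*f)*(2*e+1)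
      - 16*a*b^2*(4*f) + 4*a^2 - 4*a^2*(2*e+1)^2 - 32*a^2*b*(2*e+1) - 64*a^2*b^2 + 4 = 0 := by
  decide

lemma aux3 : ∀ a b f e : ZMod 3, a * (2*e+1) - b * (4*f) = 1 →
    12*b - 4*b*(4*f) + 4*b^2 - 4*a*(2*e+1) - 16*a*b - 8*a*b*(4*f)*(2*e+1)
      - 16*a*b^2*(4*f) + 4*a^2 - 4*a^2*(2*e+1)^2 - 32*a^2*b*(2*e+1) - 64*a^2*b^2 + 4 = 0 := by
  decide

theorem E_diff_mod_24 (a b c d : ℤ) (h : a * d - b * c = 1) (hc : (4 : ℤ) ∣ c)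
    (hd : Odd d) :
    E a b (c + 4 * a) (d + 4 * b) - E a b c d ≡ -4 [ZMOD 24] := by
  obtain ⟨f, rfl⟩ := hc
  obtain ⟨e, rfl⟩ := hd
  set P : ℤ := 12*b - 4*b*(4*f) + 4*b^2 - 4*a*(2*e+1) - 16*a*b - 8*a*b*(4*f)*(2*e+1)
      - 16*a*b^2*(4*f) + 4*a^2 - 4*a^2*(2*e+1)^2 - 32*a^2*b*(2*e+1) - 64*a^2*b^2 + 4 with hP
  have h8 : (8:ℤ) ∣ P := by
    have := aux8 (a : ZMod 8) (b : ZMod 8) (f : ZMod 8) (e : ZMod 8) (by exact_mod_cast congrArg (fun x : ℤ => (x : ZMod 8)) h)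
    have h0 : ((P : ZMod 8)) = 0 := by rw [hP]; exact_mod_cast this
    exact_mod_cast (ZMod.intCast_zmod_eq_zero_iff_dvd P 8).mp h0
  have h3 : (3:ℤ) ∣ P := by
    have := aux3 (a : ZMod 3) (b : ZMod 3) (f : ZMod 3) (e : ZMod 3) (by exact_mod_cast congrArg (fun x : ℤ => (x : ZMod 3)) h)
    have h0 : ((P : ZMod 3)) = 0 := by rw [hP]; exact_mod_cast this
    exact_mod_cast (ZMod.intCast_zmod_eq_zero_iff_dvd P 3).mp h0
  have h24 : (24:ℤ) ∣ P := by omega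
  have key : E a b (4 * f + 4 * a) (2*e+1 + 4 * b) - E a b (4 * f) (2*e+1) - (-4) = P := by
    simp only [E, hP]; ring
  rw [Int.modEq_iff_dvd]
  have : (-4 : ℤ) - (E a b (4 * f + 4 * a) (2*e+1 + 4 * b) - E a b (4 * f) (2*e+1)) = -P := by
    rw [← key]; ring
  rw [this]
  exact dvd_neg.mpr h24
end

section
/- Let m be a nonzero integer and d, d' odd integers with d ≡ d' (mod 4m). Then the extended Jacobi symbols satisfy (m/d) = (m/d'). -/
/-- The extended Jacobi (Kronecker) symbol for odd denominators: the usual Jacobi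
symbol when `d > 0`, and `sgn(m) * (m / |d|)` when `d < 0`, with `(0 / -1) = 1`. -/
def extJacobi (m d : ℤ) : ℤ :=
  if 0 < d then jacobiSym m d.natAbs
  else if m = 0 ∧ d = -1 then 1
  else m.sign * jacobiSym m d.natAbs

open ZMod

/-- The key "sign flip" property for a given `m`. -/
private def PJ (m : ℤ) : Prop :=
  ∀ b b' : ℕ, Odd b → Odd b' → ((4 * m.natAbs : ℤ) ∣ (b : ℤ) + b') →
    jacobiSym m b = m.sign * jacobiSym m b'

private lemma PJ_mul {m n : ℤ} (Hm : PJ m) (Hn : PJ n) : PJ (m * n) := by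
  intro b b' hb hb' hdvd
  have habs : ((m * n).natAbs : ℤ) = (m.natAbs : ℤ) * n.natAbs := by
    rw [Int.natAbs_mul]; push_cast; ring
  have h1 : (4 * m.natAbs : ℤ) ∣ (b : ℤ) + b' := by
    refine dvd_trans ⟨n.natAbs, ?_⟩ hdvd
    rw [habs]; ring
  have h2 : (4 * n.natAbs : ℤ) ∣ (b : ℤ) + b' := by
    refine dvd_trans ⟨m.natAbs, ?_⟩ hdvd
    rw [habs]; ring
  rw [jacobiSym.mul_left, jacobiSym.mul_left, Hm b b' hb hb' h1, Hn b b' hb hb' h2,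
    Int.sign_mul]
  ring

private lemma PJ_one : PJ 1 := by
  intro b b' _ _ _
  simp [jacobiSym.one_left]

private lemma PJ_neg_one : PJ (-1) := by
  intro b b' hb hb' hdvd
  have h4 : 4 ∣ b + b' := by
    have : (4 : ℤ) ∣ (b : ℤ) + b' := by simpa using hdvd
    exact_mod_cast this
  have hb2 := Nat.odd_iff.mp hb
  have hb'2 := Nat.odd_iff.mp hb'
  rw [jacobiSym.at_neg_one hb, jacobiSym.at_neg_one hb']
  rw [χ₄_nat_eq_if_mod_four, χ₄_nat_eq_if_mod_four]
  rcases (by omega : b % 4 = 1 ∧ b' % 4 = 3 ∨ b % 4 = 3 ∧ b' % 4 = 1) with ⟨h1, h2⟩ | ⟨h1, h2⟩ <;>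
    simp [h1, h2, hb2, hb'2]

private lemma PJ_two : PJ 2 := by
  intro b b' hb hb' hdvd
  have h8 : 8 ∣ b + b' := by
    have : (8 : ℤ) ∣ (b : ℤ) + b' := by simpa using hdvd
    exact_mod_cast this
  have hb2 := Nat.odd_iff.mp hb
  have hb'2 := Nat.odd_iff.mp hb'
  rw [jacobiSym.at_two hb, jacobiSym.at_two hb']
  rw [χ₈_nat_eq_if_mod_eight, χ₈_nat_eq_if_mod_eight]
  rcases (by omega :
      b % 8 = 1 ∧ b' % 8 = 7 ∨ b % 8 = 3 ∧ b' % 8 = 5 ∨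
      b % 8 = 5 ∧ b' % 8 = 3 ∨ b % 8 = 7 ∧ b' % 8 = 1) with
    ⟨h1, h2⟩ | ⟨h1, h2⟩ | ⟨h1, h2⟩ | ⟨h1, h2⟩ <;>
    simp [h1, h2, hb2, hb'2, Int.sign]

private lemma PJ_odd (u : ℕ) (hu : Odd u) : PJ (u : ℤ) := by
  intro b b' hb hb' hdvd
  have hu0 : 0 < u := hu.pos
  have hdvd' : (4 * u : ℤ) ∣ (b : ℤ) + b' := by
    simpa [Int.natAbs_natCast] using hdvd
  have hsign : (u : ℤ).sign = 1 := Int.sign_eq_one_of_pos (by exact_mod_cast hu0)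
  rw [hsign, one_mul]
  have h4 : 4 ∣ b + b' := by
    have : (4 : ℤ) ∣ (b : ℤ) + b' := dvd_trans ⟨u, by push_cast; ring⟩ hdvd'
    exact_mod_cast this
  have huZ : ((u : ℤ)) ∣ (b : ℤ) + b' := dvd_trans ⟨4, by ring⟩ hdvd'
  have hb2 := Nat.odd_iff.mp hb
  have hb'2 := Nat.odd_iff.mp hb'
  have hu2 := Nat.odd_iff.mp hu
  have hJ : jacobiSym (b' : ℤ) u = χ₄ u * jacobiSym (b : ℤ) u := by
    have hmod : ((b' : ℤ)) % (u : ℕ) = (-(b : ℤ)) % (u : ℕ) := by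
      have h' : ((b' : ℤ)) ≡ -(b : ℤ) [ZMOD (u : ℤ)] := by
        rw [Int.modEq_iff_dvd]
        have : -(b : ℤ) - b' = -((b : ℤ) + b') := by ring
        rw [this]
        exact dvd_neg.mpr huZ
      exact_mod_cast h'
    calc jacobiSym (b' : ℤ) u = jacobiSym (-(b : ℤ)) u := jacobiSym.mod_left' hmod
      _ = jacobiSym (-1 : ℤ) u * jacobiSym (b : ℤ) u := by
          rw [← jacobiSym.mul_left]; ring_nf
      _ = χ₄ u * jacobiSym (b : ℤ) u := by rw [jacobiSym.at_neg_one hu]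
  rcases (by omega : u % 4 = 1 ∨ u % 4 = 3) with hu4 | hu4
  · have hchi : (χ₄ u : ℤ) = 1 := χ₄_nat_one_mod_four hu4
    rw [jacobiSym.quadratic_reciprocity_one_mod_four hu4 hb,
      jacobiSym.quadratic_reciprocity_one_mod_four hu4 hb', hJ, hchi, one_mul]
  · have hchi : (χ₄ u : ℤ) = -1 := χ₄_nat_three_mod_four hu4
    rcases (by omega : b % 4 = 1 ∧ b' % 4 = 3 ∨ b % 4 = 3 ∧ b' % 4 = 1) with
      ⟨h1, h2⟩ | ⟨h1, h2⟩
    · rw [jacobiSym.quadratic_reciprocity_one_mod_four' hu h1,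
        jacobiSym.quadratic_reciprocity_three_mod_four hu4 h2, hJ, hchi]
      ring
    · rw [jacobiSym.quadratic_reciprocity_three_mod_four hu4 h1,
        jacobiSym.quadratic_reciprocity_one_mod_four' hu h2, hJ, hchi]
      ring

private lemma PJ_two_pow : ∀ e : ℕ, PJ ((2 : ℤ) ^ e)
  | 0 => by simpa using PJ_one
  | e + 1 => by
    have := PJ_mul PJ_two (PJ_two_pow e)
    rwa [show (2 : ℤ) * 2 ^ e = 2 ^ (e + 1) by ring] at this

private lemma PJ_all {m : ℤ} (hm : m ≠ 0) : PJ m := by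
  have hma : m.natAbs ≠ 0 := fun h => hm (Int.natAbs_eq_zero.mp h)
  obtain ⟨e, u, hdec, hu_odd⟩ : ∃ e u, m.natAbs = 2 ^ e * u ∧ Odd u :=
    ⟨m.natAbs.factorization 2, m.natAbs / 2 ^ m.natAbs.factorization 2,
      (Nat.ordProj_mul_ordCompl_eq_self m.natAbs 2).symm,
      Nat.odd_iff.mpr (Nat.two_dvd_ne_zero.mp (Nat.not_dvd_ordCompl Nat.prime_two hma))⟩
  have Hs : PJ m.sign := by
    rcases (by rcases m.lt_or_lt_of_ne hm with h | h
               · exact Or.inr (Int.sign_eq_neg_one_of_neg h)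
               · exact Or.inl (Int.sign_eq_one_of_pos h) : m.sign = 1 ∨ m.sign = -1) with h | h <;>
      rw [h]
    · exact PJ_one
    · exact PJ_neg_one
  have hprod := PJ_mul Hs (PJ_mul (PJ_two_pow e) (PJ_odd u hu_odd))
  have hmeq : m.sign * ((2 : ℤ) ^ e * (u : ℕ)) = m := by
    have : ((2 : ℤ) ^ e * (u : ℕ)) = (m.natAbs : ℤ) := by
      rw [hdec]; push_cast; ring
    rw [this, Int.sign_mul_natAbs]
  rwa [hmeq] at hprod

/-- Jacobi symbol depends only on the denominator mod `4 * m.natAbs`. -/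
private lemma QJ {m : ℤ} {b b' : ℕ} (hb : Odd b) (hb' : Odd b')
    (hdvd : (4 * m.natAbs : ℤ) ∣ (b : ℤ) - b') : jacobiSym m b = jacobiSym m b' := by
  rw [jacobiSym.mod_right m hb, jacobiSym.mod_right m hb']
  congr 1
  have h1 : ((b' : ℤ)) ≡ (b : ℤ) [ZMOD (4 * m.natAbs : ℤ)] := Int.modEq_iff_dvd.mpr hdvd
  have h2 : ((b' : ℤ)) % (4 * m.natAbs : ℤ) = (b : ℤ) % (4 * m.natAbs : ℤ) := h1
  have h3 : ((b % (4 * m.natAbs) : ℕ) : ℤ) = ((b' % (4 * m.natAbs) : ℕ) : ℤ) := by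
    push_cast
    rw [Int.abs_eq_natAbs]
    exact h2.symm
  exact_mod_cast h3

theorem extJacobi_periodic (m d d' : ℤ) (hm : m ≠ 0) (hd : Odd d) (hd' : Odd d')
    (h : d ≡ d' [ZMOD 4 * m]) : extJacobi m d = extJacobi m d' := by
  have hd0 : d ≠ 0 := by
    have := Int.odd_iff.mp hd; omega
  have hd'0 : d' ≠ 0 := by
    have := Int.odd_iff.mp hd'; omega
  have hdvd : ((4 * m.natAbs : ℤ)) ∣ d' - d := by
    have h1 : (4 * m) ∣ d' - d := h.dvd
    have h2 : (((4 * m).natAbs : ℕ) : ℤ) ∣ d' - d := Int.natAbs_dvd.mpr h1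
    have h3 : (((4 * m).natAbs : ℕ) : ℤ) = (4 * m.natAbs : ℤ) := by
      rw [Int.natAbs_mul]; push_cast; norm_num
    rwa [h3] at h2
  have hOb : Odd d.natAbs := Int.natAbs_odd.mpr hd
  have hOb' : Odd d'.natAbs := Int.natAbs_odd.mpr hd'
  have hmfalse : ¬(m = 0 ∧ d = -1) := fun h => hm h.1
  have hmfalse' : ¬(m = 0 ∧ d' = -1) := fun h => hm h.1
  rcases hd0.lt_or_gt with hneg | hpos <;> rcases hd'0.lt_or_gt with hneg' | hpos'
  · -- both negative
    simp only [extJacobi]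
    rw [if_neg (show ¬0 < d by omega), if_neg hmfalse, if_neg (show ¬0 < d' by omega),
      if_neg hmfalse']
    congr 1
    refine QJ hOb hOb' ?_
    rw [show ((d.natAbs : ℤ) - d'.natAbs) = d' - d by omega]
    exact hdvd
  · -- d < 0 < d'
    simp only [extJacobi]
    rw [if_neg (show ¬0 < d by omega), if_neg hmfalse, if_pos hpos']
    have := PJ_all hm d'.natAbs d.natAbs hOb' hOb (by
      rw [show ((d'.natAbs : ℤ) + d.natAbs) = d' - d by omega]
      exact hdvd)
    rw [this]
  · -- d' < 0 < d
    simp only [extJacobi]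
    rw [if_pos hpos, if_neg (show ¬0 < d' by omega), if_neg hmfalse']
    exact PJ_all hm d.natAbs d'.natAbs hOb hOb' (by
      rw [show ((d.natAbs : ℤ) + d'.natAbs) = -(d' - d) by omega]
      exact dvd_neg.mpr hdvd)
  · -- both positive
    simp only [extJacobi]
    rw [if_pos hpos, if_pos hpos']
    refine QJ hOb hOb' ?_
    rw [show ((d.natAbs : ℤ) - d'.natAbs) = -(d' - d) by omega]
    exact dvd_neg.mpr hdvd
end

section
/- Let [[a,b],[c,d]] ∈ SL₂(ℤ) with a > 0, b ≠ 0, c ≠ 0, and set c' = c + 4a, d' = d + 4b with c' ≠ 0. Then the extended Jacobi symbols satisfy (c/d) = (c'/d'). -/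
open ZMod

lemma chi4_odd {m : ℕ} (hm : m % 2 = 1) :
    (χ₄ m : ℤ) = if m % 4 = 3 then -1 else 1 := by
  rw [χ₄_nat_eq_if_mod_four, if_neg (by omega)]
  rcases (by omega : m % 4 = 1 ∨ m % 4 = 3) with h | h <;> simp [h]

lemma if_neg_mul (P : Prop) [Decidable P] (x : ℤ) :
    (if P then -x else x) = (if P then -1 else 1) * x := by
  split_ifs <;> ring

lemma jac_int_natAbs (x : ℤ) {m : ℕ} (hm : Odd m) :
    jacobiSym x m = (if x < 0 then (χ₄ m : ℤ) else 1) * jacobiSym (x.natAbs : ℤ) m := by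
  rcases lt_or_ge x 0 with h | h
  · rw [if_pos h, show ((x.natAbs : ℤ)) = -x by omega, jacobiSym.neg _ hm]
    have h2 : (χ₄ m : ℤ) * (χ₄ m : ℤ) = 1 := by
      rw [chi4_odd (Nat.odd_iff.mp hm)]; split_ifs <;> norm_num
    rw [show x = -(-x) by ring, jacobiSym.neg _ hm, ← mul_assoc, h2, one_mul]
  · rw [if_neg (by omega), show ((x.natAbs : ℤ)) = x by omega, one_mul]

lemma jac_natAbs_int (x : ℤ) {m : ℕ} (hm : Odd m) :
    jacobiSym (x.natAbs : ℤ) m = (if x < 0 then (χ₄ m : ℤ) else 1) * jacobiSym x m := by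
  rcases lt_or_ge x 0 with h | h
  · rw [if_pos h, show ((x.natAbs : ℤ)) = -x by omega, jacobiSym.neg _ hm]
  · rw [if_neg (by omega), show ((x.natAbs : ℤ)) = x by omega, one_mul]

lemma nat_gcd_eq_one {g : ℕ} (h4 : g ∣ 4) (h2 : ¬ 2 ∣ g) : g = 1 := by
  have := Nat.le_of_dvd (by norm_num) h4
  interval_cases g <;> omega

/-- coprimality from the determinant relation -/
lemma gcd_eq_one_of_dvd_four {x : ℤ} {y : ℕ} (hy : y % 2 = 1)
    (hdvd : (↑(Int.gcd x y) : ℤ) ∣ 4) : Int.gcd x y = 1 := by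
  refine nat_gcd_eq_one (by exact_mod_cast hdvd) (fun h2 => ?_)
  have h3 : (↑(Int.gcd x y) : ℤ) ∣ (y : ℤ) := Int.gcd_dvd_right _ _
  have : (2 : ℤ) ∣ (y : ℤ) := dvd_trans (by exact_mod_cast h2) h3
  omega

lemma extJacobi_eq {c d : ℤ} (hc : c ≠ 0) (hd : Odd d) :
    extJacobi c d
      = (if d < 0 then (if c < 0 then (-1 : ℤ) else 1) else 1) * jacobiSym c d.natAbs := by
  have hd0 : d ≠ 0 := by rintro rfl; simp [Int.odd_iff] at hd
  unfold extJacobi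
  rcases lt_or_gt_of_ne hd0 with h | h
  · rw [if_neg (by omega), if_neg (by tauto), if_pos h]
    congr 1
    rcases lt_or_gt_of_ne hc with h' | h'
    · rw [if_pos h', Int.sign_eq_neg_one_iff_neg.mpr h']
    · rw [if_neg (by omega), Int.sign_eq_one_iff_pos.mpr h']
  · rw [if_pos h, if_neg (by omega), one_mul]

set_option maxHeartbeats 2000000 in
lemma core (c d c' d' : ℤ) (hcodd : Odd c) (hd : Odd d) (hd' : Odd d')
    (hdet : c * d' - c' * d = -4) (h4c : (4:ℤ) ∣ c' - c) (h4d : (4:ℤ) ∣ d' - d)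
    (hsgn : c' < 0 → c < 0) : extJacobi c d = extJacobi c' d' := by
  have hc2 : c % 2 = 1 := Int.odd_iff.mp hcodd
  have hd2 : d % 2 = 1 := Int.odd_iff.mp hd
  have hd'2 : d' % 2 = 1 := Int.odd_iff.mp hd'
  have hc'2 : c' % 2 = 1 := by omega
  have hc0 : c ≠ 0 := by omega
  have hc'0 : c' ≠ 0 := by omega
  set u := c.natAbs with hu_def
  set u' := c'.natAbs with hu'_def
  set n := d.natAbs with hn_def
  set n' := d'.natAbs with hn'_def
  have hu2 : u % 2 = 1 := by omega
  have hu'2 : u' % 2 = 1 := by omega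
  have hn2 : n % 2 = 1 := by omega
  have hn'2 : n' % 2 = 1 := by omega
  have huo : Odd u := Nat.odd_iff.mpr hu2
  have hu'o : Odd u' := Nat.odd_iff.mpr hu'2
  have hno : Odd n := Nat.odd_iff.mpr hn2
  have hn'o : Odd n' := Nat.odd_iff.mpr hn'2
  -- coprimality facts
  have hgc'u : Int.gcd c' (u : ℤ) = 1 := by
    refine gcd_eq_one_of_dvd_four hu2 ?_
    have h1 : (↑(Int.gcd c' (u:ℤ)) : ℤ) ∣ c' := Int.gcd_dvd_left _ _
    have h2 : (↑(Int.gcd c' (u:ℤ)) : ℤ) ∣ (u:ℤ) := Int.gcd_dvd_right _ _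
    have h3 : (↑(Int.gcd c' (u:ℤ)) : ℤ) ∣ c := dvd_trans h2 (Int.natAbs_dvd.mpr dvd_rfl)
    have : (↑(Int.gcd c' (u:ℤ)) : ℤ) ∣ c' * d - c * d' :=
      dvd_sub (h1.mul_right d) (h3.mul_right d')
    rwa [show c' * d - c * d' = 4 by linarith] at this
  have hgcu' : Int.gcd c (u' : ℤ) = 1 := by
    refine gcd_eq_one_of_dvd_four hu'2 ?_
    have h1 : (↑(Int.gcd c (u':ℤ)) : ℤ) ∣ c := Int.gcd_dvd_left _ _
    have h2 : (↑(Int.gcd c (u':ℤ)) : ℤ) ∣ (u':ℤ) := Int.gcd_dvd_right _ _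
    have h3 : (↑(Int.gcd c (u':ℤ)) : ℤ) ∣ c' := dvd_trans h2 (Int.natAbs_dvd.mpr dvd_rfl)
    have : (↑(Int.gcd c (u':ℤ)) : ℤ) ∣ c' * d - c * d' :=
      dvd_sub (h3.mul_right d) (h1.mul_right d')
    rwa [show c' * d - c * d' = 4 by linarith] at this
  have hg2u : Int.gcd (2 : ℤ) (u : ℤ) = 1 := by
    refine gcd_eq_one_of_dvd_four hu2 ?_
    exact dvd_trans (Int.gcd_dvd_left _ _) (by norm_num)
  have hg2u' : Int.gcd (2 : ℤ) (u' : ℤ) = 1 := by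
    refine gcd_eq_one_of_dvd_four hu'2 ?_
    exact dvd_trans (Int.gcd_dvd_left _ _) (by norm_num)
  have hj4u : jacobiSym (4 : ℤ) u = 1 := by
    rw [show (4:ℤ) = 2^2 by norm_num]
    exact jacobiSym.sq_one' (by exact_mod_cast hg2u)
  have hj4u' : jacobiSym (4 : ℤ) u' = 1 := by
    rw [show (4:ℤ) = 2^2 by norm_num]
    exact jacobiSym.sq_one' (by exact_mod_cast hg2u')
  -- step D : J(d | u) = J(c' | u)
  have e4 : jacobiSym d u = jacobiSym c' u := by
    have hdvd : ((u : ℤ)) ∣ c' * d - 4 := by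
      rw [show c' * d - 4 = c * d' by linarith]
      exact (Int.natAbs_dvd.mpr dvd_rfl).mul_right d'
    have hmod : (c' * d) % (u : ℤ) = (4 : ℤ) % (u : ℤ) := by
      rw [Int.emod_eq_emod_iff_emod_sub_eq_zero]
      exact Int.emod_eq_zero_of_dvd hdvd
    have hmul : jacobiSym (c' * d) u = 1 := by
      rw [jacobiSym.mod_left' hmod, hj4u]
    have hsq : jacobiSym c' u * jacobiSym c' u = 1 := by
      have := jacobiSym.sq_one (a := c') (b := u) (by exact_mod_cast hgc'u)
      rwa [pow_two] at this
    calc jacobiSym d u = jacobiSym d u * (jacobiSym c' u * jacobiSym c' u) := by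
          rw [hsq, mul_one]
      _ = jacobiSym (c' * d) u * jacobiSym c' u := by
          rw [jacobiSym.mul_left]; ring
      _ = jacobiSym c' u := by rw [hmul, one_mul]
  -- step E : J(d' | u') = χ₄ u' * J(c | u')
  have f4 : jacobiSym d' u' = (χ₄ u' : ℤ) * jacobiSym c u' := by
    have hdvd : ((u' : ℤ)) ∣ c * d' - (-4) := by
      rw [show c * d' - (-4) = c' * d by linarith]
      exact (Int.natAbs_dvd.mpr dvd_rfl).mul_right d
    have hmod : (c * d') % (u' : ℤ) = (-4 : ℤ) % (u' : ℤ) := by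
      rw [Int.emod_eq_emod_iff_emod_sub_eq_zero]
      exact Int.emod_eq_zero_of_dvd hdvd
    have hmul : jacobiSym (c * d') u' = (χ₄ u' : ℤ) := by
      rw [jacobiSym.mod_left' hmod, show (-4:ℤ) = -(4:ℤ) by norm_num,
        jacobiSym.neg _ hu'o, hj4u', mul_one]
    have hsq : jacobiSym c u' * jacobiSym c u' = 1 := by
      have := jacobiSym.sq_one (a := c) (b := u') (by exact_mod_cast hgcu')
      rwa [pow_two] at this
    calc jacobiSym d' u' = jacobiSym d' u' * (jacobiSym c u' * jacobiSym c u') := by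
          rw [hsq, mul_one]
      _ = jacobiSym (c * d') u' * jacobiSym c u' := by
          rw [jacobiSym.mul_left]; ring
      _ = (χ₄ u' : ℤ) * jacobiSym c u' := by rw [hmul]
  -- reciprocity steps
  have e2 : jacobiSym (u : ℤ) n
      = (if u % 4 = 3 ∧ n % 4 = 3 then (-1:ℤ) else 1) * jacobiSym (n : ℤ) u := by
    rw [← jacobiSym.quadratic_reciprocity_if hu2 hn2, if_neg_mul]
  have e6 : jacobiSym (u' : ℤ) u
      = (if u' % 4 = 3 ∧ u % 4 = 3 then (-1:ℤ) else 1) * jacobiSym (u : ℤ) u' := by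
    rw [← jacobiSym.quadratic_reciprocity_if hu'2 hu2, if_neg_mul]
  have f2 : jacobiSym (u' : ℤ) n'
      = (if u' % 4 = 3 ∧ n' % 4 = 3 then (-1:ℤ) else 1) * jacobiSym (n' : ℤ) u' := by
    rw [← jacobiSym.quadratic_reciprocity_if hu'2 hn'2, if_neg_mul]
  -- assemble
  rw [extJacobi_eq hc0 hd, extJacobi_eq hc'0 hd',
    jac_int_natAbs c hno, jac_int_natAbs c' hn'o, e2, f2,
    jac_natAbs_int d huo, jac_natAbs_int d' hu'o, e4, f4,
    jac_int_natAbs c' huo, jac_int_natAbs c hu'o, e6,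
    chi4_odd hu2, chi4_odd hu'2, chi4_odd hn2, chi4_odd hn'2]
  have h4c' : c' % 4 = c % 4 := by omega
  have h4d' : d' % 4 = d % 4 := by omega
  clear hdet hcodd hd hd' huo hu'o hno hn'o e2 e4 e6 f2 f4 hgc'u hgcu' hg2u hg2u' hj4u hj4u' h4c h4d
  rcases (show u % 4 = 1 ∨ u % 4 = 3 by omega) with hA | hA <;>
  rcases (show u' % 4 = 1 ∨ u' % 4 = 3 by omega) with hA' | hA' <;>
  rcases (show n % 4 = 1 ∨ n % 4 = 3 by omega) with hB | hB <;>
  rcases (show n' % 4 = 1 ∨ n' % 4 = 3 by omega) with hB' | hB' <;>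
  by_cases hs : c < 0 <;> by_cases hs' : c' < 0 <;>
  by_cases ht : d < 0 <;> by_cases ht' : d' < 0 <;>
  simp only [hA, hA', hB, hB', hs, hs', ht, ht', if_true, if_false, ite_true, ite_false,
    show ¬((1:ℕ) = 3) by omega, show ((3:ℕ) = 3) by rfl, true_and, false_and, and_true,
    and_false, and_self, if_neg, not_false_eq_true, reduceIte] <;>
  first | ring1 | (exfalso; omega)

lemma extJacobi_shift (c d k : ℤ) (hd : Odd d) (hc0 : c ≠ 0) (hC0 : c + k * d ≠ 0)
    (hsgn : d < 0 → ((c + k * d) < 0 ↔ c < 0)) :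
    extJacobi (c + k * d) d = extJacobi c d := by
  have hd2 : d % 2 = 1 := Int.odd_iff.mp hd
  have hJ : jacobiSym (c + k * d) d.natAbs = jacobiSym c d.natAbs := by
    apply jacobiSym.mod_left'
    rw [Int.emod_eq_emod_iff_emod_sub_eq_zero]
    refine Int.emod_eq_zero_of_dvd ?_
    have h1 : ((d.natAbs : ℤ)) ∣ k * d := (Int.natAbs_dvd.mpr dvd_rfl).mul_left k
    simpa using h1
  rw [extJacobi_eq hC0 hd, extJacobi_eq hc0 hd, hJ]
  rcases lt_or_ge d 0 with h | h
  · simp only [propext (hsgn h)]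
  · rw [if_neg (not_lt.mpr h), if_neg (not_lt.mpr h)]

theorem extJacobi_c_d_eq_c'_d' (a b c d : ℤ) (h : a * d - b * c = 1) (ha : 0 < a)
    (hb : b ≠ 0) (hc : c ≠ 0) (hc' : c + 4 * a ≠ 0) (hd : Odd d)
    (hd' : Odd (d + 4 * b)) :
    extJacobi c d = extJacobi (c + 4 * a) (d + 4 * b) := by
  have hd2 : d % 2 = 1 := Int.odd_iff.mp hd
  have hd'2 : (d + 4 * b) % 2 = 1 := Int.odd_iff.mp hd'
  have hdet : c * (d + 4 * b) - (c + 4 * a) * d = -4 := by linear_combination (-4) * h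
  have h4c : (4:ℤ) ∣ (c + 4 * a) - c := ⟨a, by ring⟩
  have h4d : (4:ℤ) ∣ (d + 4 * b) - d := ⟨b, by ring⟩
  rcases Int.even_or_odd c with hev | hod
  swap
  · exact core c d _ _ hod hd hd' hdet h4c h4d (fun h' => by linarith)
  have hc2 : c % 2 = 0 := Int.even_iff.mp hev
  -- the shifted pair will be (c + k*d, d, (c+4*a) + k*(d+4*b), d+4*b) with k = ±1
  have key : ∀ k : ℤ, k = 1 ∨ k = -1 →
      (d < 0 → ((c + k * d) < 0 ↔ c < 0)) →
      ((d + 4 * b) < 0 → (((c + 4 * a) + k * (d + 4 * b)) < 0 ↔ (c + 4 * a) < 0)) →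
      (((c + 4 * a) + k * (d + 4 * b)) < 0 → (c + k * d) < 0) →
      extJacobi c d = extJacobi (c + 4 * a) (d + 4 * b) := by
    intro k hk hs1 hs2 hs3
    have hCodd : Odd (c + k * d) := by rcases hk with rfl | rfl <;> (rw [Int.odd_iff]; omega)
    have hC'odd : Odd ((c + 4 * a) + k * (d + 4 * b)) := by
      rcases hk with rfl | rfl <;> (rw [Int.odd_iff]; omega)
    have hC0 : c + k * d ≠ 0 := by rcases hk with rfl | rfl <;> omega
    have hC'0 : (c + 4 * a) + k * (d + 4 * b) ≠ 0 := by rcases hk with rfl | rfl <;> omega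
    rw [← extJacobi_shift c d k hd hc hC0 hs1,
        ← extJacobi_shift (c + 4 * a) (d + 4 * b) k hd' hc' hC'0 hs2]
    exact core _ d _ _ hCodd hd hd' (by linear_combination (-4) * h)
      ⟨a + k * b, by ring⟩ h4d hs3
  rcases lt_or_ge d 0 with htd | htd <;> rcases lt_or_ge (d + 4 * b) 0 with htd' | htd'
  · -- d < 0, d' < 0
    rcases lt_or_ge c 0 with hsc | hsc
    · -- c < 0 forces c + 4a < 0
      have hcd' : 0 < c * (d + 4 * b) := mul_pos_of_neg_of_neg hsc htd'
      have hsc' : c + 4 * a < 0 := by nlinarith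
      exact key 1 (Or.inl rfl) (fun _ => by constructor <;> intro <;> omega)
        (fun _ => by constructor <;> intro <;> omega) (fun _ => by omega)
    · -- 0 < c (c even ≠ 0... c ≥ 0 and c ≠ 0)
      have hsc0 : 0 < c := by omega
      have hsc' : 0 < c + 4 * a := by omega
      exact key (-1) (Or.inr rfl) (fun _ => by constructor <;> intro <;> omega)
        (fun _ => by constructor <;> intro <;> omega) (fun hC' => absurd hC' (by omega))
  · -- d < 0 ≤ d' : c < 0 forced
    have hsc : c < 0 := by
      by_contra hpos
      have h1 : 0 < c := by omega
      have h2 : 0 < c + 4 * a := by omega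
      nlinarith
    exact key 1 (Or.inl rfl) (fun _ => by constructor <;> intro <;> omega)
      (fun h' => absurd h' (by omega)) (fun _ => by omega)
  · -- d' < 0 ≤ d : c' > 0 forced
    have hsc' : 0 < c + 4 * a := by
      rcases lt_or_ge 0 (c + 4 * a) with h' | h'
      · exact h'
      · exfalso
        have h1 : c + 4 * a < 0 := by omega
        have h2 : c < 0 := by omega
        nlinarith
    exact key (-1) (Or.inr rfl) (fun h' => absurd h' (by omega))
      (fun _ => by constructor <;> intro <;> omega) (fun hC' => absurd hC' (by omega))
  · -- 0 ≤ d, 0 ≤ d'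
    refine key 1 (Or.inl rfl) (fun h' => absurd h' (by omega)) (fun h' => absurd h' (by omega))
      (fun hC' => ?_)
    by_contra hC
    have h1 : 0 < c + 1 * d := by
      rcases (by omega : c + 1 * d = 0 ∨ 0 < c + 1 * d) with h0 | h0
      · exfalso; omega
      · exact h0
    have h2 : 0 < d := by omega
    have h3 : 0 < d + 4 * b := by omega
    have h4 : (c + 4 * a) + 1 * (d + 4 * b) < 0 := hC'
    nlinarith [hdet]
end

section
/- If [[a,b],[c,d]] ∈ SL₂(ℤ) with c ≠ 0, d ≠ 0, b ≠ 0, and a > 0, then the extended Jacobi symbol satisfies (c/d) = (-b/d). -/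
theorem extJacobi_c_eq_neg_b (a b c d : ℤ) (h : a * d - b * c = 1) (hd : Odd d)
    (ha : 0 < a) (hb : b ≠ 0) (hc : c ≠ 0) (hd0 : d ≠ 0) :
    extJacobi c d = extJacobi (-b) d := by
  have hdvd : ((d.natAbs : ℤ)) ∣ d := Int.natAbs_dvd.mpr dvd_rfl
  have hjprod : jacobiSym (c * (-b)) d.natAbs = 1 := by
    have hcb : c * (-b) = 1 - a * d := by ring_nf; linarith
    have hmod : (c * (-b)) % (d.natAbs : ℤ) = 1 % (d.natAbs : ℤ) := by
      rw [hcb, Int.sub_emod, Int.mul_emod, Int.emod_eq_zero_of_dvd hdvd]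
      simp [Int.sub_emod]
    rw [jacobiSym.mod_left' hmod, jacobiSym.one_left]
  have hj : jacobiSym c d.natAbs = jacobiSym (-b) d.natAbs := by
    rw [jacobiSym.mul_left] at hjprod
    have hu := IsUnit.of_mul_eq_one _ hjprod
    rcases Int.isUnit_iff.mp hu with h1 | h1 <;> rw [h1] at hjprod ⊢ <;> omega
  have h2 : ¬(c = 0 ∧ d = -1) := fun h => hc h.1
  have h3 : ¬(-b = 0 ∧ d = -1) := fun h => hb (neg_eq_zero.mp h.1)
  unfold extJacobi
  by_cases hpos : 0 < d
  · simp [hpos, hj]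
  · rw [if_neg hpos, if_neg hpos, if_neg h2, if_neg h3]
    have hdneg : d < 0 := lt_of_le_of_ne (not_lt.mp hpos) hd0
    have hbc : b * c < 0 := by nlinarith
    have hs : c.sign = (-b).sign := by
      rcases lt_or_gt_of_ne hc with h' | h'
      · have hbp : 0 < b := by nlinarith
        simp [Int.sign_eq_neg_one_iff_neg.mpr h', Int.sign_eq_one_iff_pos.mpr hbp]
      · have hbn : b < 0 := by nlinarith
        simp [Int.sign_eq_one_iff_pos.mpr h', Int.sign_eq_neg_one_iff_neg.mpr hbn]
    rw [hs, hj]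
end

section
/- The group Γ₁(4) (matrices in SL₂(ℤ) congruent to the identity's upper-triangular unipotent form mod 4, i.e. a ≡ d ≡ 1 and c ≡ 0 mod 4) is generated by the matrices T = [[1,1],[0,1]] and [[1,0],[4,1]]. -/
open Matrix MatrixGroups

namespace G14aux

/-- The generator `T`. -/
def Tm : SL(2, ℤ) := ⟨!![1, 1; 0, 1], by simp [Matrix.det_fin_two_of]⟩

/-- The generator `L = [[1,0],[4,1]]`. -/
def L : SL(2, ℤ) := ⟨!![1, 0; 4, 1], by simp [Matrix.det_fin_two_of]⟩

lemma Tm_eq : Tm = ModularGroup.T := rfl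

lemma coe_Tm_zpow (n : ℤ) : ((Tm ^ n : SL(2, ℤ)) : Matrix (Fin 2) (Fin 2) ℤ) = !![1, n; 0, 1] := by
  rw [Tm_eq]; exact ModularGroup.coe_T_zpow n

lemma coe_L_zpow (m : ℤ) : ((L ^ m : SL(2, ℤ)) : Matrix (Fin 2) (Fin 2) ℤ) = !![1, 0; 4 * m, 1] := by
  induction m using Int.induction_on with
  | zero => simp [Matrix.one_fin_two]
  | succ n ih =>
      rw [_root_.zpow_add, zpow_one, Matrix.SpecialLinearGroup.coe_mul, ih]
      show _ * (L : Matrix (Fin 2) (Fin 2) ℤ) = _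
      rw [show (L : Matrix (Fin 2) (Fin 2) ℤ) = !![1, 0; 4, 1] from rfl, Matrix.mul_fin_two]
      norm_num; ring_nf
  | pred n ih =>
      rw [sub_eq_add_neg, _root_.zpow_add, Matrix.SpecialLinearGroup.coe_mul, ih]
      have : ((L ^ (-1 : ℤ) : SL(2, ℤ)) : Matrix (Fin 2) (Fin 2) ℤ) = !![1, 0; -4, 1] := by
        rw [show ((-1:ℤ)) = -1 from rfl, _root_.zpow_neg_one]
        rw [Matrix.SpecialLinearGroup.coe_inv, show (L : Matrix (Fin 2) (Fin 2) ℤ) = !![1, 0; 4, 1] from rfl, Matrix.adjugate_fin_two]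
        norm_num
      rw [this, Matrix.mul_fin_two]
      norm_num; ring_nf

/-- balanced remainder existence -/
lemma exists_red (x y : ℤ) (hy : y ≠ 0) : ∃ n : ℤ, 2 * |x + n * y| ≤ |y| := by
  have h0 : 0 ≤ x % y := Int.emod_nonneg _ hy
  have h1 : x % y < |y| := by have := Int.emod_lt x hy; rwa [Int.abs_eq_natAbs]
  have hq : y * (x / y) + x % y = x := Int.mul_ediv_add_emod x y
  by_cases h : 2 * (x % y) ≤ |y|
  · refine ⟨-(x / y), ?_⟩
    have : x + -(x / y) * y = x % y := by linarith [hq]; 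
    rw [this, abs_of_nonneg h0]; exact h
  · push_neg at h
    rcases lt_or_gt_of_ne hy with hneg | hpos
    · refine ⟨-(x / y) + 1, ?_⟩
      have hay : |y| = -y := abs_of_neg hneg
      have : x + (-(x / y) + 1) * y = x % y - |y| := by rw [hay]; ring_nf; linarith [hq]
      rw [this, abs_of_nonpos (by linarith)]
      linarith
    · refine ⟨-(x / y) - 1, ?_⟩
      have hay : |y| = y := abs_of_pos hpos
      have : x + (-(x / y) - 1) * y = x % y - |y| := by rw [hay]; ring_nf; linarith [hq]
      rw [this, abs_of_nonpos (by linarith)]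
      linarith

lemma Tm_mem : Tm ∈ CongruenceSubgroup.Gamma1 4 := by
  rw [CongruenceSubgroup.Gamma1_mem]
  refine ⟨?_, ?_, ?_⟩ <;> · show ((Tm : Matrix (Fin 2) (Fin 2) ℤ) _ _ : ZMod 4) = _; rw [show (Tm : Matrix (Fin 2) (Fin 2) ℤ) = !![1,1;0,1] from rfl]; norm_num

lemma L_mem : L ∈ CongruenceSubgroup.Gamma1 4 := by
  rw [CongruenceSubgroup.Gamma1_mem]
  refine ⟨?_, ?_, ?_⟩ <;>
  · show ((L : Matrix (Fin 2) (Fin 2) ℤ) _ _ : ZMod 4) = _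
    rw [show (L : Matrix (Fin 2) (Fin 2) ℤ) = !![1,0;4,1] from rfl]
    norm_num
    try decide

lemma gamma1_int {A : SL(2, ℤ)} (hA : A ∈ CongruenceSubgroup.Gamma1 4) :
    (4 : ℤ) ∣ (A 0 0 - 1) ∧ (4 : ℤ) ∣ A 1 0 := by
  rw [CongruenceSubgroup.Gamma1_mem] at hA
  obtain ⟨h1, _, h3⟩ := hA
  constructor
  · have : ((A 0 0 - 1 : ℤ) : ZMod 4) = 0 := by push_cast; rw [h1]; ring
    exact_mod_cast (ZMod.intCast_zmod_eq_zero_iff_dvd _ 4).mp this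
  · exact_mod_cast (ZMod.intCast_zmod_eq_zero_iff_dvd _ 4).mp h3

lemma descent : ∀ n : ℕ, ∀ A : SL(2, ℤ), A ∈ CongruenceSubgroup.Gamma1 4 →
    (A 1 0).natAbs = n → A ∈ Subgroup.closure ({Tm, L} : Set SL(2, ℤ)) := by
  intro n
  induction n using Nat.strong_induction_on with
  | _ n IH =>
  intro A hA hn
  have hT : Tm ∈ Subgroup.closure ({Tm, L} : Set SL(2, ℤ)) :=
    Subgroup.subset_closure (by simp)
  have hL : L ∈ Subgroup.closure ({Tm, L} : Set SL(2, ℤ)) :=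
    Subgroup.subset_closure (by simp)
  obtain ⟨ha, hc⟩ := gamma1_int hA
  have hdet : A 0 0 * A 1 1 - A 0 1 * A 1 0 = 1 := by
    have := A.2; rwa [Matrix.det_fin_two] at this
  by_cases hc0 : A 1 0 = 0
  · -- A is a power of Tm
    have hmul : A 0 0 * A 1 1 = 1 := by rw [hc0] at hdet; linarith
    have ha1 : A 0 0 = 1 := by
      rcases Int.eq_one_or_neg_one_of_mul_eq_one hmul with h | h
      · exact h
      · exfalso; rw [h] at ha; omega
    have hd1 : A 1 1 = 1 := by rw [ha1] at hmul; linarith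
    have hAeq : A = Tm ^ (A 0 1) := by
      apply Subtype.ext
      rw [coe_Tm_zpow]
      ext i j
      fin_cases i <;> fin_cases j <;>
        simp [ha1, hd1, hc0]
    rw [hAeq]
    exact zpow_mem hT _
  · -- reduction step
    obtain ⟨k, hk⟩ := hc
    obtain ⟨j, hn1⟩ := exists_red (A 0 0) (A 1 0) hc0
    obtain ⟨t, ht⟩ : ∃ t, j * A 1 0 = 2 * t := ⟨j * (2 * k), by rw [hk]; ring⟩
    have hstrict : 2 * |A 0 0 + j * A 1 0| < |A 1 0| := by
      rcases hn1.lt_or_eq with h | h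
      · exact h
      · exfalso
        rw [Int.abs_eq_natAbs, Int.abs_eq_natAbs, ht] at h
        omega
    have ha'ne : 4 * (A 0 0 + j * A 1 0) ≠ 0 := by
      intro h0
      rw [ht] at h0
      omega
    obtain ⟨l, hm1⟩ := exists_red (A 1 0) (4 * (A 0 0 + j * A 1 0)) ha'ne
    have habs4 : |4 * (A 0 0 + j * A 1 0)| = 4 * |A 0 0 + j * A 1 0| := by
      rw [abs_mul]; norm_num
    set B : SL(2, ℤ) := L ^ l * (Tm ^ j * A) with hBdef
    have hB : (B : Matrix (Fin 2) (Fin 2) ℤ)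
        = !![1, 0; 4 * l, 1] * (!![1, j; 0, 1] * (A : Matrix (Fin 2) (Fin 2) ℤ)) := by
      rw [hBdef, Matrix.SpecialLinearGroup.coe_mul, Matrix.SpecialLinearGroup.coe_mul,
        coe_L_zpow, coe_Tm_zpow]
    have hB10 : B 1 0 = A 1 0 + l * (4 * (A 0 0 + j * A 1 0)) := by
      show (B : Matrix (Fin 2) (Fin 2) ℤ) 1 0 = _
      rw [hB]
      simp [Matrix.mul_apply, Fin.sum_univ_two, Matrix.vecMul, dotProduct]
      ring
    have hBmem : B ∈ CongruenceSubgroup.Gamma1 4 :=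
      mul_mem (zpow_mem L_mem l) (mul_mem (zpow_mem Tm_mem j) hA)
    have hltabs : |B 1 0| < |A 1 0| := by
      rw [hB10]
      have h2 : 2 * |A 1 0 + l * (4 * (A 0 0 + j * A 1 0))| ≤ 4 * |A 0 0 + j * A 1 0| := by
        rw [← habs4]; exact hm1
      have h3 : 0 ≤ |A 1 0 + l * (4 * (A 0 0 + j * A 1 0))| := abs_nonneg _
      linarith
    have hlt : (B 1 0).natAbs < n := by
      rw [Int.abs_eq_natAbs, Int.abs_eq_natAbs] at hltabs
      omega
    have hBcl := IH _ hlt B hBmem rfl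
    have hAeq : A = (Tm ^ j)⁻¹ * ((L ^ l)⁻¹ * B) := by
      rw [hBdef]; group
    rw [hAeq]
    exact mul_mem (inv_mem (zpow_mem hT j)) (mul_mem (inv_mem (zpow_mem hL l)) hBcl)

end G14aux

theorem Gamma1_four_eq_closure :
    Subgroup.closure
      ({(⟨!![1, 1; 0, 1], by simp [Matrix.det_fin_two_of]⟩ : SL(2, ℤ)),
        (⟨!![1, 0; 4, 1], by simp [Matrix.det_fin_two_of]⟩ : SL(2, ℤ))} :
        Set SL(2, ℤ)) = CongruenceSubgroup.Gamma1 4 := by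
  apply le_antisymm
  · rw [Subgroup.closure_le]
    rintro x (rfl | rfl)
    · exact G14aux.Tm_mem
    · exact G14aux.L_mem
  · intro A hA
    exact G14aux.descent _ A hA rfl
end

section
/- The group Γ₀(4) (matrices in SL₂(ℤ) with lower-left entry divisible by 4) is generated by the matrices [[1,1],[0,1]], [[1,0],[4,1]], and -I. -/
open Matrix MatrixGroups

namespace Gamma0Four

def T : SL(2, ℤ) := ⟨!![1, 1; 0, 1], by simp [Matrix.det_fin_two_of]⟩
def L : SL(2, ℤ) := ⟨!![1, 0; 4, 1], by simp [Matrix.det_fin_two_of]⟩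
def Nn : SL(2, ℤ) := ⟨!![-1, 0; 0, -1], by simp [Matrix.det_fin_two_of]⟩

lemma T_eq : T = ModularGroup.T := rfl

lemma coe_T_zpow (n : ℤ) : (T ^ n).1 = !![1, n; 0, 1] := by
  rw [T_eq]; exact ModularGroup.coe_T_zpow n

lemma coe_L_inv : (L⁻¹).1 = !![1, 0; -4, 1] := by
  rw [Matrix.SpecialLinearGroup.coe_inv]
  simp [L, Matrix.adjugate_fin_two]

lemma coe_L_zpow (n : ℤ) : (L ^ n).1 = !![1, 0; 4 * n, 1] := by
  induction' n using Int.induction_on with n h n h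
  · rw [zpow_zero, Matrix.SpecialLinearGroup.coe_one, Matrix.one_fin_two]; norm_num
  · simp_rw [_root_.zpow_add, zpow_one, Matrix.SpecialLinearGroup.coe_mul, h]
    show _ * L.1 = _
    rw [L, Matrix.mul_fin_two]
    congrm !![_, _; ?_, _]
    push_cast; ring
  · simp_rw [_root_.zpow_sub, zpow_one, Matrix.SpecialLinearGroup.coe_mul, h, coe_L_inv, Matrix.mul_fin_two]
    congrm !![_, _; ?_, ?_] <;> push_cast <;> ring

/-- rounding division -/
lemma round_div (a c : ℤ) (hc : c ≠ 0) : ∃ n : ℤ, 2 * |a + n * c| ≤ |c| := by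
  rcases hc.lt_or_gt with h | h
  · obtain ⟨n, hn⟩ : ∃ n : ℤ, 2 * |a + n * (-c)| ≤ |(-c)| := by
      have hpos : 0 < -c := by omega
      rcases le_or_gt (2 * (a % (-c))) (-c) with h2 | h2
      · refine ⟨-(a / (-c)), ?_⟩
        have : a + -(a / (-c)) * (-c) = a % (-c) := by
          rw [Int.emod_def]; ring
        rw [this, abs_of_nonneg (Int.emod_nonneg a (by omega)), abs_of_pos hpos]
        exact h2
      · refine ⟨-(a / (-c)) - 1, ?_⟩
        have : a + (-(a / (-c)) - 1) * (-c) = a % (-c) + c := by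
          rw [Int.emod_def]; ring
        have hlt : a % (-c) < -c := Int.emod_lt_of_pos a hpos
        rw [this, abs_of_pos hpos, abs_of_nonpos (by omega)]
        omega
    exact ⟨-n, by simpa using hn⟩
  · rcases le_or_gt (2 * (a % c)) c with h2 | h2
    · refine ⟨-(a / c), ?_⟩
      have : a + -(a / c) * c = a % c := by rw [Int.emod_def]; ring
      rw [this, abs_of_nonneg (Int.emod_nonneg a (by omega)), abs_of_pos h]
      exact h2
    · refine ⟨-(a / c) - 1, ?_⟩
      have : a + (-(a / c) - 1) * c = a % c - c := by rw [Int.emod_def]; ring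
      have hlt : a % c < c := Int.emod_lt_of_pos a h
      have hnn := Int.emod_nonneg a (by omega : c ≠ 0)
      rw [this, abs_of_pos h, abs_of_nonpos (by omega)]
      omega


lemma odd_round (a m : ℤ) (ha : Odd a) : ∃ k : ℤ, 2 * |m + k * a| < |a| := by
  obtain ⟨k, hk⟩ := round_div m a (by rintro rfl; simpa using ha)
  refine ⟨k, lt_of_le_of_ne hk ?_⟩
  intro heq
  obtain ⟨t, ht⟩ := ha
  rcases abs_choice a with h1 | h1 <;> rcases abs_choice (m + k * a) with h2 | h2 <;> omega

lemma closure_ge : CongruenceSubgroup.Gamma0 4 ≤ Subgroup.closure ({T, L, Nn} : Set SL(2, ℤ)) := by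
  set H := Subgroup.closure ({T, L, Nn} : Set SL(2, ℤ)) with hH
  have hT : T ∈ H := Subgroup.subset_closure (by simp)
  have hL : L ∈ H := Subgroup.subset_closure (by simp)
  have hN : Nn ∈ H := Subgroup.subset_closure (by simp)
  suffices key : ∀ n : ℕ, ∀ g : SL(2, ℤ), (g.1 1 0).natAbs = n → (4 : ℤ) ∣ g.1 1 0 → g ∈ H by
    intro g hg
    rw [CongruenceSubgroup.Gamma0_mem] at hg
    exact key _ g rfl ((ZMod.intCast_zmod_eq_zero_iff_dvd _ 4).mp (by exact_mod_cast hg))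
  intro n
  induction n using Nat.strong_induction_on with
  | _ n ih =>
  intro g hgn hdvd
  obtain ⟨m, hm⟩ := hdvd
  set a := g.1 0 0 with ha_def
  set b := g.1 0 1 with hb_def
  set c := g.1 1 0 with hc_def
  set d := g.1 1 1 with hd_def
  have hdet : a * d - b * c = 1 := by
    have h2 := g.2
    rw [Matrix.det_fin_two] at h2
    exact h2
  have hg_eta : g.1 = !![a, b; c, d] := Matrix.eta_fin_two g.1
  by_cases hc : c = 0
  · have had : a * d = 1 := by rw [hc] at hdet; linarith
    rcases Int.mul_eq_one_iff_eq_one_or_neg_one.mp had with ⟨h1, h2⟩ | ⟨h1, h2⟩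
    · have : g = T ^ b := by
        apply Subtype.ext
        rw [coe_T_zpow, hg_eta, h1, h2, hc]
      rw [this]; exact Subgroup.zpow_mem _ hT b
    · have : g = Nn * T ^ (-b) := by
        apply Subtype.ext
        rw [Matrix.SpecialLinearGroup.coe_mul, coe_T_zpow, hg_eta, h1, h2, hc]
        show _ = Nn.1 * _
        rw [Nn, Matrix.mul_fin_two]
        norm_num
      rw [this]
      exact Subgroup.mul_mem _ hN (Subgroup.zpow_mem _ hT _)
  · have haodd : Odd a := by
      have h1 : Odd (a * d) := ⟨2 * (b * m), by rw [hm] at hdet; linear_combination hdet⟩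
      exact (Int.odd_mul.mp h1).1
    obtain ⟨n1, hn1⟩ := round_div a c hc
    set a' := a + n1 * c with ha'_def
    have ha'odd : Odd a' := by
      obtain ⟨t, ht⟩ := haodd
      exact ⟨t + n1 * (2 * m), by rw [ha'_def, hm, ht]; ring⟩
    obtain ⟨k, hk⟩ := odd_round a' m ha'odd
    set g' := L ^ k * (T ^ n1 * g) with hg'_def
    have h1 : (T ^ n1 * g).1 = !![a', b + n1 * d; c, d] := by
      rw [Matrix.SpecialLinearGroup.coe_mul, coe_T_zpow, hg_eta, Matrix.mul_fin_two]
      congrm !![?_, ?_; ?_, ?_] <;> ring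
    have h2 : g'.1 = !![a', b + n1 * d; 4 * (m + k * a'), 4 * k * (b + n1 * d) + d] := by
      rw [hg'_def, Matrix.SpecialLinearGroup.coe_mul, coe_L_zpow, h1, Matrix.mul_fin_two]
      congrm !![?_, ?_; ?_, ?_]
      · ring
      · ring
      · linear_combination hm
      · ring
    have hg'c : g'.1 1 0 = 4 * (m + k * a') := by rw [h2]; simp
    have habs : |(4 : ℤ) * (m + k * a')| < |c| := by
      rw [abs_mul]
      have h4 : |(4 : ℤ)| = 4 := by norm_num
      rw [h4]
      linarith
    have hlt : (g'.1 1 0).natAbs < n := by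
      rw [← hgn, hg'c]
      rw [Int.abs_eq_natAbs, Int.abs_eq_natAbs] at habs
      exact_mod_cast habs
    have hg'H : g' ∈ H := ih _ hlt g' rfl ⟨m + k * a', hg'c⟩
    have : g = (T ^ n1)⁻¹ * ((L ^ k)⁻¹ * g') := by
      rw [hg'_def]; group
    rw [this]
    exact Subgroup.mul_mem _ (Subgroup.inv_mem _ (Subgroup.zpow_mem _ hT _))
      (Subgroup.mul_mem _ (Subgroup.inv_mem _ (Subgroup.zpow_mem _ hL _)) hg'H)

end Gamma0Four

theorem Gamma0_four_eq_closure :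
    Subgroup.closure
      ({(⟨!![1, 1; 0, 1], by simp [Matrix.det_fin_two_of]⟩ : SL(2, ℤ)),
        (⟨!![1, 0; 4, 1], by simp [Matrix.det_fin_two_of]⟩ : SL(2, ℤ)),
        (⟨!![-1, 0; 0, -1], by simp [Matrix.det_fin_two_of]⟩ : SL(2, ℤ))} :
        Set SL(2, ℤ)) = CongruenceSubgroup.Gamma0 4 := by
  have hset : ({(⟨!![1, 1; 0, 1], by simp [Matrix.det_fin_two_of]⟩ : SL(2, ℤ)),
        (⟨!![1, 0; 4, 1], by simp [Matrix.det_fin_two_of]⟩ : SL(2, ℤ)),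
        (⟨!![-1, 0; 0, -1], by simp [Matrix.det_fin_two_of]⟩ : SL(2, ℤ))} :
        Set SL(2, ℤ)) = {Gamma0Four.T, Gamma0Four.L, Gamma0Four.Nn} := rfl
  rw [hset]
  refine le_antisymm ((Subgroup.closure_le _).mpr ?_) Gamma0Four.closure_ge
  rintro x (rfl | rfl | rfl) <;> exact CongruenceSubgroup.Gamma0_mem.mpr (by decide)
end
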